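/- Let a,b,c ≥ 2 be positive integers with gcd(a,b,c)=1. If gcd(b,c)=d and b=d·b', c=d·c', then g(a,b,c) = d·g(a,b',c') + a(d-1), where g denotes the Frobenius number. -/

import Mathlib

/-- Johnson's formula: if `gcd(b,c) = d`, `b = d*b'`, `c = d*c'`, then
`g(a,b,c) = d * g(a,b',c') + a*(d-1)`. -/
theorem johnson_formula (a b c d b' c' g g' : ℕ)
    (ha : 2 ≤ a) (hb : 2 ≤ b) (hc : 2 ≤ c)
    (hgcd : Nat.gcd a (Nat.gcd b c) = 1)
    (hd : Nat.gcd b c = d) (hb' : b = d * b') (hc' : c = d * c')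
    (hg : IsGreatest {n : ℕ | 0 < n ∧ ¬ ∃ x y z : ℕ, n = a * x + b * y + c * z} g)
    (hg' : IsGreatest {n : ℕ | 0 < n ∧ ¬ ∃ x y z : ℕ, n = a * x + b' * y + c' * z} g') :
    g = d * g' + a * (d - 1) := by
  rw [hd] at hgcd
  have hdpos : 0 < d := by
    rw [← hd]; exact Nat.gcd_pos_of_pos_left c (by omega)
  have hg'pos : 0 < g' := hg'.1.1
  set N := d * g' + a * (d - 1) with hN
  -- N is not representable
  have hNmem : N ∈ {n : ℕ | 0 < n ∧ ¬ ∃ x y z : ℕ, n = a * x + b * y + c * z} := by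
    constructor
    · have : 1 ≤ d * g' := Nat.one_le_iff_ne_zero.mpr (by positivity)
      omega
    · rintro ⟨x, y, z, hxyz⟩
      -- a*x ≡ a*(d-1) [MOD d]
      have h1 : a * x ≡ a * (d - 1) [MOD d] := by
        have e1 : (a * x) % d = N % d := by
          rw [hxyz, hb', hc']
          have : a * x + d * b' * y + d * c' * z = a * x + (b' * y + c' * z) * d := by ring
          rw [this, Nat.add_mul_mod_self_right]
        have e2 : N % d = (a * (d - 1)) % d := by
          rw [hN, add_comm, Nat.add_mul_mod_self_left]
        exact e1.trans e2
      have h2 : x ≡ d - 1 [MOD d] :=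
        Nat.ModEq.cancel_left_of_coprime (by rwa [Nat.gcd_comm]) h1
      have h3 : x % d = d - 1 := by
        have := h2.symm
        unfold Nat.ModEq at this
        rw [Nat.mod_eq_of_lt (by omega)] at this
        omega
      have h4 : x = d * (x / d) + (d - 1) := by
        conv_lhs => rw [← Nat.div_add_mod x d]
        rw [h3]
      set q := x / d with hq
      have key : d * g' = d * (a * q + b' * y + c' * z) := by
        have e1 : d * g' + a * (d - 1) = a * (d * q + (d - 1)) + b * y + c * z := by
          rw [← h4]; exact hxyz
        have h5 : a * (d * q + (d - 1)) + b * y + c * z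
            = d * (a * q + b' * y + c' * z) + a * (d - 1) := by rw [hb', hc']; ring
        omega
      have hrep : g' = a * q + b' * y + c' * z :=
        Nat.eq_of_mul_eq_mul_left hdpos key
      exact hg'.1.2 ⟨q, y, z, hrep⟩
  -- every n > N is representable
  have hbig : ∀ n : ℕ, N < n → ∃ x y z : ℕ, n = a * x + b * y + c * z := by
    intro n hn
    -- get inverse of a mod d
    obtain ⟨u, hu⟩ : ∃ u, a * u % d = 1 % d := by
      rcases Nat.lt_or_ge d 2 with h | h
      · have : d = 1 := by omega
        subst this; exact ⟨0, by simp⟩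
      · obtain ⟨u, -, hu⟩ := Nat.exists_mul_mod_eq_one_of_coprime hgcd h
        exact ⟨u, by rw [hu, Nat.one_mod_eq_one.mpr (by omega)]⟩
    set x0 := (u * n) % d with hx0
    have hx0lt : x0 < d := Nat.mod_lt _ hdpos
    have hcong : a * x0 ≡ n [MOD d] := by
      calc a * x0 ≡ a * (u * n) [MOD d] := (Nat.ModEq.refl a).mul (Nat.mod_modEq (u * n) d)
        _ = (a * u) * n := by ring
        _ ≡ 1 * n [MOD d] := Nat.ModEq.mul_right n (hu : a * u ≡ 1 [MOD d])
        _ = n := one_mul n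
    have hx0le : a * x0 ≤ a * (d - 1) := Nat.mul_le_mul_left a (by omega)
    have hle : a * x0 ≤ n := by omega
    obtain ⟨m, hm⟩ : d ∣ n - a * x0 := (Nat.modEq_iff_dvd' hle).mp hcong
    have hmn : n = a * x0 + d * m := by omega
    have hmgt : g' < m := by
      have : d * g' < d * m := by omega
      exact Nat.lt_of_mul_lt_mul_left this
    have hmrep : ∃ x y z : ℕ, m = a * x + b' * y + c' * z := by
      by_contra hmem
      exact absurd (hg'.2 ⟨by omega, hmem⟩) (by omega)
    obtain ⟨p, y, z, hpyz⟩ := hmrep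
    exact ⟨x0 + d * p, y, z, by rw [hmn, hpyz, hb', hc']; ring⟩
  -- conclude
  have h1 : N ≤ g := hg.2 hNmem
  have h2 : ¬ N < g := fun h => hg.1.2 (hbig g h)
  omega
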